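/- Fix m ≥ 1, r ≥ 1 and 0 < c < 1/(2m). Let M_m be the set of m×m real positive semidefinite matrices Σ with unit diagonal (Σ_ii = 1) and off-diagonal entries Σ_ij ∈ [−1/m, 1], and let M_m^E ⊆ M_m be the subset of equicorrelation matrices (all off-diagonal entries equal). For Σ ∈ M_m let X = (X_1,…,X_m) be a centered multivariate Gaussian vector with covariance Σ, let p_i = Φ(−X_i), and set α̃_m(Σ, r, c) = Pr( ((1/m) Σ_{i=1}^m p_i^r)^{1/r} ≤ c ). Then sup_{Σ ∈ M_m} α̃_m(Σ, r, c) = sup_{Σ ∈ M_m^E} α̃_m(Σ, r, c) = α̃_m(1_m 1_m^T, r, c), where 1_m 1_m^T is the all-ones matrix (perfect correlation). -/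

import Mathlib

open MeasureTheory ProbabilityTheory

/-- Standard normal CDF `Φ`. -/
noncomputable def Phi (x : ℝ) : ℝ := ((gaussianReal 0 1 : Measure ℝ) (Set.Iic x)).toReal

/-- Law of a centered Gaussian vector `X = A Z` with `Z` i.i.d. standard normal,
so that `X` has covariance `A Aᵀ`. -/
noncomputable def gaussianVec (m : ℕ) (A : Matrix (Fin m) (Fin m) ℝ) :
    Measure (Fin m → ℝ) :=
  (Measure.pi fun _ : Fin m => (gaussianReal 0 1 : Measure ℝ)).map A.mulVec

/-- Type-I error `α̃_m(Σ, r, c)` of the generalized-mean test when the Gaussian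
vector is realized as `A Z` (with `A Aᵀ = Σ`). -/
noncomputable def alphaTilde (m : ℕ) (A : Matrix (Fin m) (Fin m) ℝ) (r c : ℝ) : ENNReal :=
  gaussianVec m A {x : Fin m → ℝ |
    ((1 / m : ℝ) * ∑ i : Fin m, Phi (-(x i)) ^ r) ^ (1 / r) ≤ c}

/-- The class `M_m` of correlation matrices with off-diagonal entries in `[-1/m, 1]`. -/
def corrSet (m : ℕ) : Set (Matrix (Fin m) (Fin m) ℝ) :=
  {Sig | Sig.PosSemidef ∧ (∀ i, Sig i i = 1) ∧
    ∀ i j, i ≠ j → Sig i j ∈ Set.Icc (-(1:ℝ) / m) 1}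

/-- The subclass `M_m^E` of equicorrelation matrices. -/
def equiSet (m : ℕ) : Set (Matrix (Fin m) (Fin m) ℝ) :=
  {Sig | Sig ∈ corrSet m ∧ ∃ ρ : ℝ, ∀ i j, i ≠ j → Sig i j = ρ}

section S6aux
open Real Set Filter
open scoped ENNReal NNReal

namespace S6

noncomputable def phi : ℝ → ℝ := gaussianPDFReal 0 1

lemma phi_pos (x : ℝ) : 0 < phi x := gaussianPDFReal_pos 0 1 x one_ne_zero

lemma phi_cont : Continuous phi := by
  unfold phi gaussianPDFReal
  continuity

lemma phi_integrable : Integrable phi := integrable_gaussianPDFReal 0 1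

lemma phi_even (x : ℝ) : phi (-x) = phi x := by
  unfold phi gaussianPDFReal
  norm_num

lemma measure_Iic (x : ℝ) :
    (gaussianReal 0 1 : Measure ℝ) (Set.Iic x) = ENNReal.ofReal (∫ t in Iic x, phi t) :=
  gaussianReal_apply_eq_integral 0 one_ne_zero _

lemma Phi_eq (x : ℝ) : Phi x = ∫ t in Iic x, phi t := by
  rw [Phi, measure_Iic, ENNReal.toReal_ofReal]
  exact setIntegral_nonneg measurableSet_Iic fun t _ => (phi_pos t).le

lemma Phi_sub (x y : ℝ) : Phi y - Phi x = ∫ t in x..y, phi t := by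
  rw [Phi_eq, Phi_eq]
  exact intervalIntegral.integral_Iic_sub_Iic phi_integrable.integrableOn
    phi_integrable.integrableOn

lemma Phi_strictMono : StrictMono Phi := by
  intro x y hxy
  have h : 0 < ∫ t in x..y, phi t :=
    intervalIntegral.intervalIntegral_pos_of_pos phi_integrable.intervalIntegrable
      (fun t => phi_pos t) hxy
  have := Phi_sub x y
  linarith

lemma Phi_hasDerivAt (x : ℝ) : HasDerivAt Phi (phi x) x := by
  have h : HasDerivAt (fun u => ∫ t in (0:ℝ)..u, phi t) (phi x) x :=
    (intervalIntegral.integral_hasStrictDerivAt_right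
      phi_integrable.intervalIntegrable
      (phi_cont.stronglyMeasurableAtFilter _ _) phi_cont.continuousAt).hasDerivAt
  have heq : Phi = fun u => Phi 0 + ∫ t in (0:ℝ)..u, phi t := by
    funext u
    rw [← Phi_sub 0 u]; ring
  rw [heq]
  simpa using (h.const_add (Phi 0))

lemma Phi_continuous : Continuous Phi :=
  continuous_iff_continuousAt.2 fun x => (Phi_hasDerivAt x).continuousAt

lemma Phi_nonneg (x : ℝ) : 0 ≤ Phi x := ENNReal.toReal_nonneg

lemma Phi_le_one (x : ℝ) : Phi x ≤ 1 := by
  rw [Phi]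
  have h := prob_le_one (μ := (gaussianReal 0 1 : Measure ℝ)) (s := Set.Iic x)
  calc ((gaussianReal 0 1 : Measure ℝ) (Set.Iic x)).toReal ≤ (1 : ℝ≥0∞).toReal :=
        ENNReal.toReal_mono ENNReal.one_ne_top h
    _ = 1 := by simp

lemma measure_Iic' (x : ℝ) :
    (gaussianReal 0 1 : Measure ℝ) (Set.Iic x) = ENNReal.ofReal (Phi x) := by
  rw [Phi_eq, measure_Iic]

lemma measure_Ioi (x : ℝ) :
    (gaussianReal 0 1 : Measure ℝ) (Set.Ioi x) = ENNReal.ofReal (1 - Phi x) := by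
  have h := measure_compl (μ := (gaussianReal 0 1 : Measure ℝ)) measurableSet_Iic
    (measure_ne_top _ (Set.Iic x))
  rw [Set.compl_Iic] at h
  rw [h, measure_univ, measure_Iic', ENNReal.ofReal_sub 1 (Phi_nonneg x), ENNReal.ofReal_one]

lemma gauss_null_singleton (x : ℝ) : (gaussianReal 0 1 : Measure ℝ) {x} = 0 :=
  gaussianReal_absolutelyContinuous 0 one_ne_zero (Real.volume_singleton)

lemma measure_Ici (x : ℝ) :
    (gaussianReal 0 1 : Measure ℝ) (Set.Ici x) = ENNReal.ofReal (1 - Phi x) := by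
  have h : (gaussianReal 0 1 : Measure ℝ) (Set.Ici x) = (gaussianReal 0 1) (Set.Ioi x) := by
    refine (measure_eq_measure_of_null_diff Set.Ioi_subset_Ici_self ?_).symm
    have hd : Set.Ici x \ Set.Ioi x = {x} := by
      ext y
      simp only [Set.mem_diff, Set.mem_Ici, Set.mem_Ioi, Set.mem_singleton_iff, not_lt]
      constructor
      · rintro ⟨h1, h2⟩; exact le_antisymm h2 h1
      · rintro rfl; exact ⟨le_rfl, le_rfl⟩
    rw [hd]; exact gauss_null_singleton x
  rw [h, measure_Ioi]

lemma map_neg_gauss :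
    (gaussianReal 0 1 : Measure ℝ).map (fun y => (-1) * y) = gaussianReal 0 1 := by
  have h : gaussianReal ((-1) * 0) (NNReal.mk ((-1:ℝ)^2) (sq_nonneg _) * 1) = gaussianReal 0 1 := by
    congr 1
    · ring
    · ext; norm_num
  rw [gaussianReal_map_const_mul (-1), h]

lemma Phi_neg (x : ℝ) : Phi (-x) = 1 - Phi x := by
  have h : (gaussianReal 0 1 : Measure ℝ) (Set.Iic (-x))
      = (gaussianReal 0 1 : Measure ℝ) (Set.Ici x) := by
    conv_lhs => rw [← map_neg_gauss]
    rw [Measure.map_apply (measurable_const_mul (-1)) measurableSet_Iic]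
    congr 1
    ext y
    simp only [Set.mem_preimage, Set.mem_Iic, Set.mem_Ici]
    constructor <;> intro h <;> nlinarith
  rw [Phi, h, measure_Ici, ENNReal.toReal_ofReal (by linarith [Phi_le_one x])]

lemma Phi_zero : Phi 0 = 1 / 2 := by
  have := Phi_neg 0
  rw [neg_zero] at this
  linarith

lemma Phi_pos (x : ℝ) : 0 < Phi x :=
  lt_of_le_of_lt (Phi_nonneg (x - 1)) (Phi_strictMono (by linarith))

lemma Phi_lt_one (x : ℝ) : Phi x < 1 := by
  have h := Phi_pos (-x)
  rw [Phi_neg] at h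
  linarith

lemma tendsto_Phi_atTop : Filter.Tendsto Phi Filter.atTop (nhds 1) := by
  have h := tendsto_measure_Iic_atTop (gaussianReal 0 1 : Measure ℝ)
  rw [measure_univ] at h
  have h2 := (ENNReal.tendsto_toReal ENNReal.one_ne_top).comp h
  exact h2

lemma exists_q {c : ℝ} (hc0 : 0 < c) (hc1 : c < 1 / 2) :
    ∃ q : ℝ, 0 < q ∧ Phi q = 1 - c := by
  have h1 : ∀ᶠ x in Filter.atTop, 1 - c < Phi x :=
    tendsto_Phi_atTop.eventually_const_lt (by linarith)
  obtain ⟨b, hb⟩ := h1.exists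
  have ha : Phi (-b) < 1 - c := by rw [Phi_neg]; linarith [hc0]
  have hab : (-b) ≤ b := by
    by_contra hcon
    exact absurd (Phi_strictMono (lt_of_not_ge hcon)) (by linarith)
  obtain ⟨q, _, hq⟩ := intermediate_value_Icc hab Phi_continuous.continuousOn
    ⟨ha.le, hb.le⟩
  refine ⟨q, ?_, hq⟩
  have : Phi 0 < Phi q := by rw [Phi_zero, hq]; linarith
  exact Phi_strictMono.lt_iff_lt.mp this

lemma Phi_neg_le_iff {c q x : ℝ} (hq : Phi q = 1 - c) : Phi (-x) ≤ c ↔ q ≤ x := by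
  rw [Phi_neg]
  constructor
  · intro h
    exact Phi_strictMono.le_iff_le.mp (by rw [hq]; linarith)
  · intro h
    have := Phi_strictMono.le_iff_le.mpr h
    rw [hq] at this
    linarith

lemma phi_anti {x y : ℝ} (hx : 0 ≤ x) (hxy : x ≤ y) : phi y ≤ phi x := by
  unfold phi gaussianPDFReal
  have : Real.exp (-(y - 0) ^ 2 / (2 * ((1:ℝ≥0):ℝ))) ≤
      Real.exp (-(x - 0) ^ 2 / (2 * ((1:ℝ≥0):ℝ))) := by
    apply Real.exp_le_exp.mpr
    rw [NNReal.coe_one]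
    nlinarith
  exact mul_le_mul_of_nonneg_left this (by positivity)

lemma convexOn_Phi_neg : ConvexOn ℝ (Set.Ici (0:ℝ)) (fun x => Phi (-x)) := by
  have hder : ∀ x : ℝ, HasDerivAt (fun u => Phi (-u)) (-(phi (-x))) x := by
    intro x
    have := (Phi_hasDerivAt (-x)).comp x (hasDerivAt_neg x)
    simp only [mul_neg, mul_one] at this
    exact this
  apply MonotoneOn.convexOn_of_deriv (convex_Ici 0)
  · exact (Phi_continuous.comp continuous_neg).continuousOn
  · intro x _
    exact (hder x).differentiableAt.differentiableWithinAt
  · intro x hx y hy hxy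
    rw [interior_Ici] at hx hy
    rw [(hder x).deriv, (hder y).deriv, phi_even, phi_even, neg_le_neg_iff]
    exact phi_anti (le_of_lt hx) hxy

lemma pdf_mul_pdf {a b : ℝ≥0} (ha : a ≠ 0) (hb : b ≠ 0) (z x : ℝ) :
    gaussianPDFReal 0 a x * gaussianPDFReal 0 b (z - x)
      = gaussianPDFReal 0 (a + b) z * gaussianPDFReal (a * z / (a + b)) (a * b / (a + b)) x := by
  have hA : (0:ℝ) < a := lt_of_le_of_ne a.coe_nonneg (by exact_mod_cast (Ne.symm ha))
  have hB : (0:ℝ) < b := lt_of_le_of_ne b.coe_nonneg (by exact_mod_cast (Ne.symm hb))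
  unfold gaussianPDFReal
  push_cast
  rw [mul_mul_mul_comm, mul_mul_mul_comm ((√(2 * π * ((a:ℝ) + b)))⁻¹)]
  congr 1
  · rw [← mul_inv, ← mul_inv, ← Real.sqrt_mul (by positivity), ← Real.sqrt_mul (by positivity)]
    congr 2
    field_simp
  · rw [← Real.exp_add, ← Real.exp_add]
    congr 1
    field_simp
    ring

lemma lintegral_pdf_mul_pdf {a b : ℝ≥0} (ha : a ≠ 0) (hb : b ≠ 0) (z : ℝ) :
    ∫⁻ x, gaussianPDF 0 a x * gaussianPDF 0 b (z - x) = gaussianPDF 0 (a + b) z := by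
  have hab : a * b / (a + b) ≠ 0 := by
    apply div_ne_zero (mul_ne_zero ha hb)
    simp [ha, hb]
  calc ∫⁻ x, gaussianPDF 0 a x * gaussianPDF 0 b (z - x)
      = ∫⁻ x, ENNReal.ofReal (gaussianPDFReal 0 a x * gaussianPDFReal 0 b (z - x)) := by
        simp_rw [gaussianPDF, ← ENNReal.ofReal_mul (gaussianPDFReal_nonneg 0 a _)]
    _ = ∫⁻ x, gaussianPDF 0 (a + b) z
          * ENNReal.ofReal (gaussianPDFReal (a * z / (a + b)) (a * b / (a + b)) x) := by
        congr 1
        funext x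
        rw [pdf_mul_pdf ha hb, ENNReal.ofReal_mul (gaussianPDFReal_nonneg 0 (a+b) _)]
        rfl
    _ = gaussianPDF 0 (a + b) z := by
        rw [lintegral_const_mul _ (measurable_gaussianPDFReal _ _).ennreal_ofReal,
          lintegral_gaussianPDFReal_eq_one _ hab, mul_one]

lemma conv_gauss (a b : ℝ≥0) :
    Measure.map (fun p : ℝ × ℝ => p.1 + p.2)
      ((gaussianReal 0 a).prod (gaussianReal 0 b)) = gaussianReal 0 (a + b) := by
  by_cases ha : a = 0
  · subst ha
    rw [gaussianReal_zero_var, Measure.dirac_prod, zero_add,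
      Measure.map_map measurable_add measurable_prodMk_left]
    have : (fun p : ℝ × ℝ => p.1 + p.2) ∘ Prod.mk (0:ℝ) = id := by
      funext y; simp
    rw [this, Measure.map_id]
  by_cases hb : b = 0
  · subst hb
    rw [gaussianReal_zero_var, Measure.prod_dirac, add_zero,
      Measure.map_map measurable_add (measurable_prodMk_right (y := (0:ℝ)))]
    have : (fun p : ℝ × ℝ => p.1 + p.2) ∘ (fun x : ℝ => (x, (0:ℝ))) = id := by
      funext y; simp
    rw [this, Measure.map_id]
  -- main case
  ext s hs
  rw [Measure.map_apply measurable_add hs,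
    Measure.prod_apply (measurable_add hs)]
  have slice : ∀ x : ℝ, (gaussianReal 0 b) (Prod.mk x ⁻¹' ((fun p : ℝ × ℝ => p.1 + p.2) ⁻¹' s))
      = ∫⁻ z, Set.indicator s (fun z => gaussianPDF 0 b (z - x)) z := by
    intro x
    have hmeas : MeasurableSet ((fun y => x + y) ⁻¹' s) := (measurable_const_add x) hs
    have h1 : Prod.mk x ⁻¹' ((fun p : ℝ × ℝ => p.1 + p.2) ⁻¹' s) = (fun y => x + y) ⁻¹' s := rfl
    rw [h1, gaussianReal_of_var_ne_zero _ hb, withDensity_apply _ hmeas,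
      ← lintegral_indicator hmeas]
    have h2 : ∀ y : ℝ, ((fun y => x + y) ⁻¹' s).indicator (gaussianPDF 0 b) y
        = Set.indicator s (fun z => gaussianPDF 0 b (z - x)) (x + y) := by
      intro y
      by_cases hy : x + y ∈ s
      · rw [Set.indicator_of_mem hy, Set.indicator_of_mem (by exact hy : y ∈ _)]
        simp
      · rw [Set.indicator_of_notMem hy, Set.indicator_of_notMem (by exact hy : y ∉ _)]
    simp_rw [h2]
    exact (lintegral_add_left_eq_self _ x)
  simp_rw [slice]
  have hFmeas : Measurable (fun q : ℝ × ℝ =>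
      Set.indicator s (fun z => gaussianPDF 0 b (z - q.1)) q.2) := by
    have : (fun q : ℝ × ℝ => Set.indicator s (fun z => gaussianPDF 0 b (z - q.1)) q.2)
        = Set.indicator ((Set.univ : Set ℝ) ×ˢ s) (fun q : ℝ × ℝ => gaussianPDF 0 b (q.2 - q.1)) := by
      funext q
      by_cases hq : q.2 ∈ s
      · rw [Set.indicator_of_mem hq]
        simp [Set.indicator, hq]
      · rw [Set.indicator_of_notMem hq]
        simp [Set.indicator, hq]
    rw [this]
    exact ((measurable_gaussianPDF 0 b).comp (measurable_snd.sub measurable_fst)).indicator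
      (MeasurableSet.univ.prod hs)
  rw [gaussianReal_of_var_ne_zero _ ha,
    lintegral_withDensity_eq_lintegral_mul _ (measurable_gaussianPDF 0 a)
      (by exact hFmeas.lintegral_prod_right')]
  have swap : ∫⁻ x, (gaussianPDF 0 a * fun x => ∫⁻ z,
        Set.indicator s (fun z => gaussianPDF 0 b (z - x)) z) x
      = ∫⁻ z, ∫⁻ x, gaussianPDF 0 a x
          * Set.indicator s (fun z => gaussianPDF 0 b (z - x)) z := by
    have h1 : ∀ x : ℝ, gaussianPDF 0 a x * ∫⁻ z,
          Set.indicator s (fun z => gaussianPDF 0 b (z - x)) z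
        = ∫⁻ z, gaussianPDF 0 a x * Set.indicator s (fun z => gaussianPDF 0 b (z - x)) z := by
      intro x
      have hm : Measurable (Set.indicator s (fun z => gaussianPDF 0 b (z - x))) := by
        exact ((measurable_gaussianPDF 0 b).comp (measurable_id.sub_const x)).indicator hs
      rw [← lintegral_const_mul _ hm]
    simp_rw [Pi.mul_apply, h1]
    refine lintegral_lintegral_swap ?_
    have : Measurable fun q : ℝ × ℝ => gaussianPDF 0 a q.1
        * Set.indicator s (fun z => gaussianPDF 0 b (z - q.1)) q.2 :=
      ((measurable_gaussianPDF 0 a).comp measurable_fst).mul hFmeas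
    exact this.aemeasurable
  rw [swap]
  have inner : ∀ z : ℝ, (∫⁻ x, gaussianPDF 0 a x
        * Set.indicator s (fun z => gaussianPDF 0 b (z - x)) z)
      = Set.indicator s (gaussianPDF 0 (a + b)) z := by
    intro z
    by_cases hz : z ∈ s
    · simp_rw [Set.indicator_of_mem hz]
      exact lintegral_pdf_mul_pdf ha hb z
    · simp_rw [Set.indicator_of_notMem hz, mul_zero, lintegral_zero]
  simp_rw [inner]
  rw [lintegral_indicator hs _, gaussianReal_of_var_ne_zero _ (by simp [ha, hb]),
    withDensity_apply _ hs]

lemma pi_map_sum : ∀ (n : ℕ) (v : Fin n → ℝ),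
    Measure.map (fun z : Fin n → ℝ => ∑ i, v i * z i)
        (Measure.pi fun _ : Fin n => (gaussianReal 0 1 : Measure ℝ))
      = gaussianReal 0 (∑ i, (NNReal.mk (v i ^ 2) (sq_nonneg _))) := by
  intro n
  induction n with
  | zero =>
    intro v
    have h : (fun z : Fin 0 → ℝ => ∑ i, v i * z i) = fun _ => (0:ℝ) := by
      funext z; simp
    rw [h, Measure.map_const, measure_univ, one_smul]
    simp [gaussianReal_zero_var]
  | succ n ih =>
    intro v
    set e := MeasurableEquiv.piFinSuccAbove (fun _ : Fin (n+1) => ℝ) 0 with he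
    have hmp := measurePreserving_piFinSuccAbove (fun _ : Fin (n+1) => (gaussianReal 0 1 : Measure ℝ)) 0
    have hcomp : (fun z : Fin (n+1) → ℝ => ∑ i, v i * z i)
        = (fun p : ℝ × (Fin n → ℝ) => v 0 * p.1 + ∑ j : Fin n, v j.succ * p.2 j) ∘ e := by
      funext z
      simp only [Function.comp_apply, he, MeasurableEquiv.piFinSuccAbove_apply]
      rw [Fin.sum_univ_succ]
      simp [Fin.zero_succAbove, Fin.tail]
    have hmeas2 : Measurable (fun p : ℝ × (Fin n → ℝ) =>
        v 0 * p.1 + ∑ j : Fin n, v j.succ * p.2 j) := by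
      apply Measurable.add
      · exact measurable_fst.const_mul _
      · apply Finset.measurable_sum
        intro j _
        exact (measurable_snd.eval).const_mul _
    rw [hcomp, ← Measure.map_map hmeas2 e.measurable, hmp.map_eq]
    have hsplit : (fun p : ℝ × (Fin n → ℝ) => v 0 * p.1 + ∑ j : Fin n, v j.succ * p.2 j)
        = (fun q : ℝ × ℝ => q.1 + q.2)
          ∘ (Prod.map (fun x : ℝ => v 0 * x) (fun z : Fin n → ℝ => ∑ j, v j.succ * z j)) := by
      funext p; rfl
    have hmeas3 : Measurable (fun z : Fin n → ℝ => ∑ j, v j.succ * z j) :=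
      Finset.measurable_sum _ fun j _ => (measurable_pi_apply j).const_mul _
    rw [hsplit, ← Measure.map_map measurable_add
      ((measurable_const_mul _).prodMap hmeas3),
      ← Measure.map_prod_map _ _ (measurable_const_mul _) hmeas3,
      gaussianReal_map_const_mul, ih]
    simp only [mul_zero, mul_one]
    rw [conv_gauss]
    congr 1
    rw [Fin.sum_univ_succ]

lemma gauss_tail_le {s : ℝ≥0} (hs : s ≤ 1) {q : ℝ} (hq : 0 < q) :
    (gaussianReal 0 s : Measure ℝ) (Set.Ici q) ≤ ENNReal.ofReal (1 - Phi q) := by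
  rw [← measure_Ici q]
  by_cases h0 : s = 0
  · subst h0
    rw [gaussianReal_zero_var, Measure.dirac_apply' _ measurableSet_Ici]
    simp [Set.indicator, hq.not_ge]
  · have hmap : (gaussianReal 0 s : Measure ℝ)
        = (gaussianReal 0 1 : Measure ℝ).map (fun x => Real.sqrt s * x) := by
      rw [gaussianReal_map_const_mul]
      congr 1
      · simp
      · ext
        simp [Real.sq_sqrt s.coe_nonneg]
    rw [hmap, Measure.map_apply (measurable_const_mul _) measurableSet_Ici]
    apply measure_mono
    intro x hx
    simp only [Set.mem_preimage, Set.mem_Ici] at hx ⊢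
    have hs1 : Real.sqrt s ≤ 1 := by
      rw [show (1:ℝ) = Real.sqrt 1 by rw [Real.sqrt_one]]
      exact Real.sqrt_le_sqrt (by exact_mod_cast hs)
    have hspos : 0 < Real.sqrt s := Real.sqrt_pos.mpr
      (lt_of_le_of_ne s.coe_nonneg (by exact_mod_cast (Ne.symm h0)))
    have hxpos : 0 < x := by nlinarith
    nlinarith

lemma eventMeasurable (m : ℕ) (hm : 1 ≤ m) (r c : ℝ) :
    MeasurableSet {x : Fin m → ℝ |
      ((1 / m : ℝ) * ∑ i : Fin m, Phi (-(x i)) ^ r) ^ (1 / r) ≤ c} := by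
  have hcont : Continuous fun x : Fin m → ℝ =>
      ((1 / m : ℝ) * ∑ i : Fin m, Phi (-(x i)) ^ r) ^ (1 / r) := by
    apply Continuous.rpow_const
    · apply Continuous.mul continuous_const
      apply continuous_finset_sum
      intro i _
      exact (Phi_continuous.comp (continuous_neg.comp (continuous_apply i))).rpow_const
        (fun x => Or.inl (ne_of_gt (Phi_pos _)))
    · intro x
      left
      have hmR : (0:ℝ) < m := by exact_mod_cast hm
      have hpos : 0 < (1 / m : ℝ) * ∑ i : Fin m, Phi (-(x i)) ^ r := by
        apply mul_pos (by positivity)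
        apply Finset.sum_pos
        · intro i _
          exact Real.rpow_pos_of_pos (Phi_pos _) r
        · exact ⟨⟨0, hm⟩, Finset.mem_univ _⟩
      exact ne_of_gt hpos
  exact measurableSet_le hcont.measurable measurable_const

lemma mulVec_eq (m : ℕ) (A : Matrix (Fin m) (Fin m) ℝ) :
    A.mulVec = fun (z : Fin m → ℝ) i => ∑ j, A i j * z j := by
  funext z i
  simp [Matrix.mulVec, dotProduct]

lemma mulVec_measurable (m : ℕ) (A : Matrix (Fin m) (Fin m) ℝ) :
    Measurable (A.mulVec : (Fin m → ℝ) → (Fin m → ℝ)) := by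
  rw [mulVec_eq]
  exact measurable_pi_iff.mpr fun i =>
    Finset.measurable_sum _ fun j _ => (measurable_pi_apply j).const_mul _

lemma alphaTilde_le (m : ℕ) (hm : 1 ≤ m) {r c q : ℝ} (hr : 1 ≤ r)
    (hc0 : 0 < c) (hc : c < 1 / (2 * m)) (hq0 : 0 < q) (hq : Phi q = 1 - c)
    (A : Matrix (Fin m) (Fin m) ℝ)
    (hA : ∀ i k : Fin m, ∑ j, A i j * A k j ≤ 1) :
    alphaTilde m A r c ≤ ENNReal.ofReal c := by
  have hmR : (1:ℝ) ≤ m := by exact_mod_cast hm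
  have hm0 : (m:ℝ) ≠ 0 := by linarith
  set v : Fin m → ℝ := fun j => (1 / m : ℝ) * ∑ i, A i j with hv
  have hsub : A.mulVec ⁻¹' {x : Fin m → ℝ |
        ((1 / m : ℝ) * ∑ i : Fin m, Phi (-(x i)) ^ r) ^ (1 / r) ≤ c}
      ⊆ (fun z : Fin m → ℝ => ∑ j, v j * z j) ⁻¹' (Set.Ici q) := by
    intro z hz
    simp only [Set.mem_preimage, Set.mem_setOf_eq, Set.mem_Ici] at hz ⊢
    set X : Fin m → ℝ := A.mulVec z with hX
    set p : Fin m → ℝ := fun i => Phi (-(X i)) with hp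
    have hpm : (1 / m : ℝ) * ∑ i, p i ≤ c := by
      have h1 := Real.arith_mean_le_rpow_mean (s := Finset.univ)
        (fun _ : Fin m => (1 / m : ℝ)) p (fun i _ => by positivity)
        (by
          rw [Finset.sum_const, Finset.card_univ, Fintype.card_fin, nsmul_eq_mul]
          field_simp)
        (fun i _ => Phi_nonneg _) hr
      rw [← Finset.mul_sum, ← Finset.mul_sum] at h1
      exact h1.trans hz
    have hmpos : (0:ℝ) < m := by linarith
    have hsump : ∑ i, p i ≤ m * c := by
      rw [div_mul_eq_mul_div, one_mul, div_le_iff₀ hmpos] at hpm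
      linarith [hpm]
    have hmc : (m:ℝ) * c < 1 / 2 := by
      rw [lt_div_iff₀ (by positivity : (0:ℝ) < 2 * m)] at hc
      nlinarith
    have heach : ∀ i, p i < 1 / 2 := by
      intro i
      have hle : p i ≤ ∑ k, p k :=
        Finset.single_le_sum (f := p) (fun k _ => Phi_nonneg _) (Finset.mem_univ i)
      linarith
    have hXpos : ∀ i, X i ∈ Set.Ici (0:ℝ) := by
      intro i
      have h2 : Phi (-(X i)) < Phi 0 := by rw [Phi_zero]; exact heach i
      have h3 := Phi_strictMono.lt_iff_lt.mp h2
      simp only [Set.mem_Ici]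
      linarith
    have hJ := convexOn_Phi_neg.map_sum_le (t := Finset.univ)
      (w := fun _ : Fin m => (1 / m : ℝ)) (p := X) (fun i _ => by positivity)
      (by
        rw [Finset.sum_const, Finset.card_univ, Fintype.card_fin, nsmul_eq_mul]
        field_simp)
      (fun i _ => hXpos i)
    simp only [smul_eq_mul] at hJ
    have hmean : Phi (-(∑ i, (1 / m : ℝ) * X i)) ≤ c := by
      refine hJ.trans ?_
      rw [← Finset.mul_sum]
      exact hpm
    have hqle : q ≤ ∑ i, (1 / m : ℝ) * X i := (Phi_neg_le_iff hq).mp hmean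
    have hswap : ∑ i, (1 / m : ℝ) * X i = ∑ j, v j * z j := by
      have hXi : ∀ i, X i = ∑ j, A i j * z j := by
        intro i
        rw [hX, mulVec_eq]
      simp_rw [hXi, Finset.mul_sum]
      rw [Finset.sum_comm]
      apply Finset.sum_congr rfl
      intro j _
      show ∑ i, (1 / m : ℝ) * (A i j * z j) = ((1 / m : ℝ) * ∑ i, A i j) * z j
      rw [mul_assoc, Finset.sum_mul, Finset.mul_sum]
    rw [← hswap]
    exact hqle
  rw [alphaTilde, gaussianVec,
    Measure.map_apply (mulVec_measurable m A) (eventMeasurable m hm r c)]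
  refine le_trans (measure_mono hsub) ?_
  have hmeaslin : Measurable fun z : Fin m → ℝ => ∑ j, v j * z j :=
    Finset.measurable_sum _ fun j _ => (measurable_pi_apply j).const_mul _
  rw [← Measure.map_apply hmeaslin measurableSet_Ici, pi_map_sum]
  have hvar : (∑ j, (NNReal.mk (v j ^ 2) (sq_nonneg _))) ≤ 1 := by
    rw [← NNReal.coe_le_coe, NNReal.coe_sum, NNReal.coe_one]
    simp only [NNReal.coe_mk]
    have key : ∑ j, (∑ i, A i j) * (∑ k, A k j) ≤ (m:ℝ) * m := by
      have h2 : ∀ j : Fin m, (∑ i, A i j) * (∑ k, A k j) = ∑ i, ∑ k, A i j * A k j := by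
        intro j
        rw [Finset.sum_mul]
        exact Finset.sum_congr rfl fun i _ => by rw [Finset.mul_sum]
      calc ∑ j, (∑ i, A i j) * (∑ k, A k j) = ∑ j, ∑ i, ∑ k : Fin m, A i j * A k j :=
            Finset.sum_congr rfl fun j _ => h2 j
        _ = ∑ i, ∑ j, ∑ k : Fin m, A i j * A k j := Finset.sum_comm
        _ = ∑ i : Fin m, ∑ k : Fin m, ∑ j, A i j * A k j :=
            Finset.sum_congr rfl fun i _ => Finset.sum_comm
        _ ≤ ∑ i : Fin m, ∑ k : Fin m, (1:ℝ) :=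
            Finset.sum_le_sum fun i _ => Finset.sum_le_sum fun k _ => hA i k
        _ = (m:ℝ) * m := by
            simp [Finset.sum_const, Finset.card_univ, mul_comm]
    have hv2 : ∀ j, v j ^ 2 = (1 / m : ℝ)^2 * ((∑ i, A i j) * (∑ k, A k j)) := by
      intro j
      show ((1 / m : ℝ) * ∑ i, A i j)^2 = _
      ring
    calc ∑ j, v j ^ 2 = (1 / m : ℝ)^2 * ∑ j, (∑ i, A i j) * (∑ k, A k j) := by
          rw [Finset.mul_sum]
          exact Finset.sum_congr rfl fun j _ => hv2 j
      _ ≤ (1 / m : ℝ)^2 * ((m:ℝ) * m) :=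
          mul_le_mul_of_nonneg_left key (by positivity)
      _ = 1 := by field_simp
  have hfin := gauss_tail_le hvar hq0
  rwa [hq, sub_sub_cancel] at hfin

lemma alphaTilde_one (m : ℕ) (hm : 1 ≤ m) {r c q : ℝ} (hr : 1 ≤ r)
    (hq0 : 0 < q) (hq : Phi q = 1 - c)
    (Aone : Matrix (Fin m) (Fin m) ℝ)
    (hAone : Aone * Aone.transpose = Matrix.of fun _ _ => (1 : ℝ)) :
    alphaTilde m Aone r c = ENNReal.ofReal c := by
  have hmR : (1:ℝ) ≤ m := by exact_mod_cast hm
  have hm0 : (m:ℝ) ≠ 0 := by linarith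
  have hr0 : r ≠ 0 := by linarith
  set i0 : Fin m := ⟨0, hm⟩ with hi0
  have hentry : ∀ i k : Fin m, ∑ j, Aone i j * Aone k j = 1 := by
    intro i k
    have h := congrFun (congrFun hAone i) k
    simpa [Matrix.mul_apply, Matrix.transpose_apply] using h
  have hrows : ∀ i j, Aone i j = Aone i0 j := by
    intro i j
    have h0 : ∑ j', (Aone i j' - Aone i0 j')^2 = 0 := by
      have hcalc : ∑ j', (Aone i j' - Aone i0 j')^2
          = (∑ j', Aone i j' * Aone i j') - 2 * (∑ j', Aone i j' * Aone i0 j')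
            + ∑ j', Aone i0 j' * Aone i0 j' := by
        rw [Finset.mul_sum, ← Finset.sum_sub_distrib, ← Finset.sum_add_distrib]
        exact Finset.sum_congr rfl fun j' _ => by ring
      rw [hcalc, hentry i i, hentry i i0, hentry i0 i0]
      ring
    have h1 := (Finset.sum_eq_zero_iff_of_nonneg
      (fun j' _ => sq_nonneg (Aone i j' - Aone i0 j'))).mp h0 j (Finset.mem_univ j)
    have h2 : Aone i j - Aone i0 j = 0 := by
      nlinarith [sq_nonneg (Aone i j - Aone i0 j)]
    linarith
  set a : Fin m → ℝ := fun j => Aone i0 j with ha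
  have hmv : ∀ (z : Fin m → ℝ) (i : Fin m), Aone.mulVec z i = ∑ j, a j * z j := by
    intro z i
    rw [mulVec_eq]
    exact Finset.sum_congr rfl fun j _ => by rw [hrows i j]
  have hset : Aone.mulVec ⁻¹' {x : Fin m → ℝ |
        ((1 / m : ℝ) * ∑ i : Fin m, Phi (-(x i)) ^ r) ^ (1 / r) ≤ c}
      = (fun z : Fin m → ℝ => ∑ j, a j * z j) ⁻¹' (Set.Ici q) := by
    ext z
    simp only [Set.mem_preimage, Set.mem_setOf_eq, Set.mem_Ici]
    have hsum : ∑ i : Fin m, Phi (-(Aone.mulVec z i)) ^ r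
        = (m : ℝ) * Phi (-(∑ j, a j * z j)) ^ r := by
      rw [Finset.sum_congr rfl fun i _ => by rw [hmv z i]]
      rw [Finset.sum_const, Finset.card_univ, Fintype.card_fin, nsmul_eq_mul]
    rw [hsum, ← mul_assoc]
    have hone : (1 / m : ℝ) * m = 1 := by field_simp
    rw [hone, one_mul]
    have hpow : (Phi (-(∑ j, a j * z j)) ^ r) ^ (1 / r) = Phi (-(∑ j, a j * z j)) := by
      rw [← Real.rpow_mul (Phi_nonneg _), mul_one_div, div_self hr0, Real.rpow_one]
    rw [hpow]
    exact Phi_neg_le_iff hq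
  rw [alphaTilde, gaussianVec,
    Measure.map_apply (mulVec_measurable m Aone) (eventMeasurable m hm r c), hset]
  have hmeaslin : Measurable fun z : Fin m → ℝ => ∑ j, a j * z j :=
    Finset.measurable_sum _ fun j _ => (measurable_pi_apply j).const_mul _
  rw [← Measure.map_apply hmeaslin measurableSet_Ici, pi_map_sum]
  have hvar : (∑ j, (NNReal.mk (a j ^ 2) (sq_nonneg _))) = 1 := by
    refine NNReal.coe_injective ?_
    rw [NNReal.coe_sum, NNReal.coe_one]
    simp only [NNReal.coe_mk]
    have := hentry i0 i0
    rw [← this]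
    exact Finset.sum_congr rfl fun j _ => pow_two (a j)
  rw [hvar, measure_Ici, hq, sub_sub_cancel]

end S6
end S6aux

/-- for `r ≥ 1` and `0 < c < 1/(2m)`, the worst-case type-I error of the
generalized-mean test over `M_m` equals that over `M_m^E`, and both are attained at
perfect correlation `Σ = 1ₘ1ₘᵀ`. -/
theorem stmt_6 (m : ℕ) (hm : 1 ≤ m) (r c : ℝ) (hr : 1 ≤ r)
    (hc0 : 0 < c) (hc : c < 1 / (2 * m))
    (Aone : Matrix (Fin m) (Fin m) ℝ)
    (hAone : Aone * Aone.transpose = Matrix.of fun _ _ => (1 : ℝ)) :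
    sSup {x : ENNReal | ∃ Sig ∈ corrSet m, ∃ A : Matrix (Fin m) (Fin m) ℝ,
        A * A.transpose = Sig ∧ x = alphaTilde m A r c}
      = alphaTilde m Aone r c ∧
    sSup {x : ENNReal | ∃ Sig ∈ equiSet m, ∃ A : Matrix (Fin m) (Fin m) ℝ,
        A * A.transpose = Sig ∧ x = alphaTilde m A r c}
      = alphaTilde m Aone r c := by
  have hmR : (1:ℝ) ≤ m := by exact_mod_cast hm
  have hc2 : c < 1 / 2 :=
    lt_of_lt_of_le hc (one_div_le_one_div_of_le (by norm_num) (by linarith))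
  obtain ⟨q, hq0, hq⟩ := S6.exists_q hc0 hc2
  have hone : alphaTilde m Aone r c = ENNReal.ofReal c :=
    S6.alphaTilde_one m hm hr hq0 hq Aone hAone
  have hbound : ∀ A : Matrix (Fin m) (Fin m) ℝ, (A * A.transpose) ∈ corrSet m →
      alphaTilde m A r c ≤ ENNReal.ofReal c := by
    intro A hA
    apply S6.alphaTilde_le m hm hr hc0 hc hq0 hq
    intro i k
    have he : (A * A.transpose) i k = ∑ j, A i j * A k j := by
      simp [Matrix.mul_apply, Matrix.transpose_apply]
    rw [← he]
    rcases eq_or_ne i k with rfl | hik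
    · rw [hA.2.1 i]
    · exact (hA.2.2 i k hik).2
  have hSig1 : (Matrix.of fun _ _ => (1:ℝ)) ∈ corrSet m := by
    refine ⟨?_, fun i => rfl, fun i j _ => ⟨?_, le_rfl⟩⟩
    · rw [← hAone, ← Matrix.conjTranspose_eq_transpose_of_trivial]
      exact Matrix.posSemidef_self_mul_conjTranspose Aone
    · show -(1:ℝ) / m ≤ 1
      have h1 : -(1:ℝ) / m ≤ 0 := by
        apply div_nonpos_of_nonpos_of_nonneg <;> linarith
      linarith
  have hSig1e : (Matrix.of fun _ _ => (1:ℝ)) ∈ equiSet m :=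
    ⟨hSig1, 1, fun _ _ _ => rfl⟩
  constructor
  · apply le_antisymm
    · apply sSup_le
      rintro x ⟨Sig, hSig, A, hAAT, rfl⟩
      rw [hone]
      exact hbound A (by rw [hAAT]; exact hSig)
    · exact le_sSup ⟨_, hSig1, Aone, hAone, rfl⟩
  · apply le_antisymm
    · apply sSup_le
      rintro x ⟨Sig, hSig, A, hAAT, rfl⟩
      rw [hone]
      exact hbound A (by rw [hAAT]; exact hSig.1)
    · exact le_sSup ⟨_, hSig1e, Aone, hAone, rfl⟩
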